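/- For every integer k ≥ 1 and every vector v = (v₁,v₂) with v₁v₂ > 0 and 7|v₁|/3 ≤ |v₂| ≤ 3|v₁|, the image w = (-1)^k [[2k+1, -2k-2],[-6k-2, 6k+5]] v satisfies w₁w₂ < 0 and 7|w₁|/3 ≤ |w₂| ≤ 3|w₁|. -/
import Mathlib


set_option maxHeartbeats 1600000 in
/-- For every `k ≥ 1`, the matrix `M₄M₃ᵏ = (-1)ᵏ[[2k+1,-2k-2],[-6k-2,6k+5]]`
maps the cone `C₁ = {v : v₁v₂ > 0, 7|v₁|/3 ≤ |v₂| ≤ 3|v₁|}` into the cone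
`C₄ = {w : w₁w₂ < 0, 7|w₁|/3 ≤ |w₂| ≤ 3|w₁|}`. -/
theorem stmt6 (k : ℕ) (hk : 1 ≤ k) (v : Fin 2 → ℝ)
    (hv : v 0 * v 1 > 0) (hlo : 7 * |v 0| / 3 ≤ |v 1|) (hhi : |v 1| ≤ 3 * |v 0|) :
    let w := (((-1 : ℝ) ^ k) •
      !![2 * (k : ℝ) + 1, -2 * (k : ℝ) - 2;
         -6 * (k : ℝ) - 2, 6 * (k : ℝ) + 5]).mulVec v
    w 0 * w 1 < 0 ∧ 7 * |w 0| / 3 ≤ |w 1| ∧ |w 1| ≤ 3 * |w 0| := by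
  intro w
  have hk1 : (1:ℝ) ≤ (k:ℝ) := by exact_mod_cast hk
  set a := v 0 with ha
  set b := v 1 with hb
  have hw0 : w 0 = (-1:ℝ)^k * ((2*(k:ℝ)+1)*a + (-2*(k:ℝ)-2)*b) := by
    simp [w, Matrix.mulVec, dotProduct, Fin.sum_univ_two]; ring
  have hw1 : w 1 = (-1:ℝ)^k * ((-6*(k:ℝ)-2)*a + (6*(k:ℝ)+5)*b) := by
    simp [w, Matrix.mulVec, dotProduct, Fin.sum_univ_two]; ring
  have hs : ((-1:ℝ)^k)^2 = 1 := by
    rcases Nat.even_or_odd k with h|h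
    · rw [h.neg_one_pow]; norm_num
    · rw [h.neg_one_pow]; norm_num
  have habs : |(-1:ℝ)^k| = 1 := by
    rcases Nat.even_or_odd k with h|h
    · rw [h.neg_one_pow]; norm_num
    · rw [h.neg_one_pow]; norm_num
  have hmul : ∀ X Y : ℝ, ((-1:ℝ)^k * X) * ((-1:ℝ)^k * Y) = X * Y := by
    intro X Y
    have h : ((-1:ℝ)^k * X) * ((-1:ℝ)^k * Y) = ((-1:ℝ)^k)^2 * (X*Y) := by ring
    rw [h, hs, one_mul]
  rcases lt_trichotomy a 0 with hA|hA|hA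
  · have hB : b < 0 := by
      by_contra h; push_neg at h; nlinarith
    have h1 : |a| = -a := abs_of_neg hA
    have h2 : |b| = -b := abs_of_neg hB
    rw [h1, h2] at hlo hhi
    have hX : (2*(k:ℝ)+1)*a + (-2*(k:ℝ)-2)*b > 0 := by nlinarith
    have hY : (-6*(k:ℝ)-2)*a + (6*(k:ℝ)+5)*b < 0 := by nlinarith
    refine ⟨?_, ?_, ?_⟩
    · rw [hw0, hw1, hmul]; nlinarith
    · rw [hw0, hw1, abs_mul, abs_mul, habs, one_mul, one_mul,
        abs_of_pos hX, abs_of_neg hY]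
      nlinarith [mul_nonneg (Nat.cast_nonneg k : (0:ℝ) ≤ k) (by linarith : (0:ℝ) ≤ 7*a/3 - b),
        mul_nonneg (Nat.cast_nonneg k : (0:ℝ) ≤ k) (by linarith : (0:ℝ) ≤ a - b)]
    · rw [hw0, hw1, abs_mul, abs_mul, habs, one_mul, one_mul,
        abs_of_pos hX, abs_of_neg hY]
      nlinarith [mul_nonneg (Nat.cast_nonneg k : (0:ℝ) ≤ k) (by linarith : (0:ℝ) ≤ 7*a/3 - b),
        mul_nonneg (Nat.cast_nonneg k : (0:ℝ) ≤ k) (by linarith : (0:ℝ) ≤ a - b)]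
  · exfalso; rw [hA] at hv; simp at hv
  · have hB : b > 0 := by
      by_contra h; push_neg at h; nlinarith
    have h1 : |a| = a := abs_of_pos hA
    have h2 : |b| = b := abs_of_pos hB
    rw [h1, h2] at hlo hhi
    have hX : (2*(k:ℝ)+1)*a + (-2*(k:ℝ)-2)*b < 0 := by nlinarith
    have hY : (-6*(k:ℝ)-2)*a + (6*(k:ℝ)+5)*b > 0 := by nlinarith
    refine ⟨?_, ?_, ?_⟩
    · rw [hw0, hw1, hmul]; nlinarith
    · rw [hw0, hw1, abs_mul, abs_mul, habs, one_mul, one_mul,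
        abs_of_neg hX, abs_of_pos hY]
      nlinarith [mul_nonneg (Nat.cast_nonneg k : (0:ℝ) ≤ k) (by linarith : (0:ℝ) ≤ b - 7*a/3),
        mul_nonneg (Nat.cast_nonneg k : (0:ℝ) ≤ k) (by linarith : (0:ℝ) ≤ b - a)]
    · rw [hw0, hw1, abs_mul, abs_mul, habs, one_mul, one_mul,
        abs_of_neg hX, abs_of_pos hY]
      nlinarith [mul_nonneg (Nat.cast_nonneg k : (0:ℝ) ≤ k) (by linarith : (0:ℝ) ≤ b - 7*a/3),
        mul_nonneg (Nat.cast_nonneg k : (0:ℝ) ≤ k) (by linarith : (0:ℝ) ≤ b - a)]
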